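/- Let F be a finite field, and let U₁ and U₂ be linear codes of length n over F with parity-check matrix H₁ of U₁ and generator matrix G₂ of U₂. Then U₁ and U₂ form an LCP if and only if the matrix H₁·G₂ᵀ is invertible over F. -/

import Mathlib

open Matrix

/-- Linear codes `U₁` (dimension `k`, parity-check `H₁`) and `U₂` (dimension `n-k`,
generator `G₂`) over a finite field form an LCP iff `H₁·G₂ᵀ` is invertible. -/
theorem stmt5 {F : Type*} [Field F] [Fintype F] (n k : ℕ) (hk : k ≤ n)
    (U₁ U₂ : Submodule F (Fin n → F))
    (G₂ : Matrix (Fin (n - k)) (Fin n) F)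
    (H₁ : Matrix (Fin (n - k)) (Fin n) F)
    (hU₁ : Module.finrank F U₁ = k)
    (hG₂ : U₂ = Submodule.span F (Set.range fun i => G₂ i))
    (hG₂ind : LinearIndependent F fun i => G₂ i)
    (hH₁ : (Submodule.span F (Set.range fun i => H₁ i) : Set (Fin n → F)) =
      {x | ∀ c ∈ U₁, ∑ j, x j * c j = 0})
    (hH₁ind : LinearIndependent F fun i => H₁ i) :
    (U₁ ⊓ U₂ = ⊥ ∧ U₁ ⊔ U₂ = ⊤) ↔ IsUnit (H₁ * G₂ᵀ) := by
  classical
  -- membership in U₂ via vecMul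
  have hU₂' : ∀ x, x ∈ U₂ ↔ ∃ v, v ᵥ* G₂ = x := by
    intro x
    rw [hG₂, show (Set.range fun i => G₂ i) = Set.range G₂.row from rfl, ← range_vecMulLinear]
    simp [LinearMap.mem_range]
  -- U₁ is contained in the kernel of H₁
  have hmemU₁ : ∀ x ∈ U₁, H₁ *ᵥ x = 0 := by
    intro x hx
    funext i
    have h1 : H₁ i ∈ (Submodule.span F (Set.range fun i => H₁ i) : Set (Fin n → F)) :=
      Submodule.subset_span ⟨i, rfl⟩
    rw [hH₁] at h1
    simpa [Matrix.mulVec, dotProduct] using h1 x hx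
  -- rank of H₁
  have hrank : H₁.rank = n - k := by
    have := hH₁ind.rank_matrix (M := H₁)
    simpa using this
  -- kernel of H₁ equals U₁
  have hker : ∀ x, H₁ *ᵥ x = 0 → x ∈ U₁ := by
    have hle : U₁ ≤ LinearMap.ker H₁.mulVecLin := by
      intro x hx
      simpa [LinearMap.mem_ker] using hmemU₁ x hx
    have h2 := LinearMap.finrank_range_add_finrank_ker H₁.mulVecLin
    have h3 : Module.finrank F (Fin n → F) = n := by simp
    have hdim : Module.finrank F (LinearMap.ker H₁.mulVecLin) ≤ Module.finrank F U₁ := by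
      have : Module.finrank F (LinearMap.range H₁.mulVecLin) = n - k := hrank
      omega
    have heq := Submodule.eq_of_le_of_finrank_le hle hdim
    intro x hx
    rw [heq]
    simpa [LinearMap.mem_ker] using hx
  have hU₂rank : Module.finrank F U₂ = n - k := by
    rw [hG₂, finrank_span_eq_card hG₂ind]
    simp
  constructor
  · rintro ⟨hinf, hsup⟩
    rw [← Matrix.mulVec_injective_iff_isUnit]
    intro v w hvw
    have hz : (H₁ * G₂ᵀ) *ᵥ (v - w) = 0 := by
      rw [Matrix.mulVec_sub, hvw, sub_self]
    have hx2 : (v - w) ᵥ* G₂ ∈ U₂ := (hU₂' _).2 ⟨v - w, rfl⟩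
    have hx1 : (v - w) ᵥ* G₂ ∈ U₁ := by
      apply hker
      have : H₁ *ᵥ (G₂ᵀ *ᵥ (v - w)) = 0 := by
        rw [Matrix.mulVec_mulVec, hz]
      simpa [Matrix.mulVec_transpose] using this
    have hx0 : (v - w) ᵥ* G₂ = 0 := by
      have := hinf ▸ (Submodule.mem_inf.2 ⟨hx1, hx2⟩)
      simpa using this
    have hinj : Function.Injective G₂.vecMul := Matrix.vecMul_injective_iff.2 hG₂ind
    have : v - w = 0 := hinj (by simpa using hx0)
    exact sub_eq_zero.mp this
  · intro h
    have hinj : Function.Injective (H₁ * G₂ᵀ).mulVec := Matrix.mulVec_injective_iff_isUnit.2 h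
    have hinf : U₁ ⊓ U₂ = ⊥ := by
      rw [eq_bot_iff]
      intro x hx
      obtain ⟨hx1, hx2⟩ := Submodule.mem_inf.1 hx
      obtain ⟨v, rfl⟩ := (hU₂' x).1 hx2
      have h0 : (H₁ * G₂ᵀ) *ᵥ v = 0 := by
        rw [← Matrix.mulVec_mulVec, Matrix.mulVec_transpose]
        exact hmemU₁ _ hx1
      have : v = 0 := hinj (by simpa using h0)
      simp [this]
    refine ⟨hinf, ?_⟩
    apply Submodule.eq_top_of_finrank_eq
    have h4 := Submodule.finrank_sup_add_finrank_inf_eq U₁ U₂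
    rw [hinf] at h4
    simp only [finrank_bot, add_zero, hU₁, hU₂rank] at h4
    simp [h4]
    omega
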